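/- For every integer n ≥ 2, an invertible linear map φ : V → V is an automorphism of the algebra B if and only if φ(e₁) ∈ span{e₁} and, writing φ(e₁) = λ e₁, the scalar λ equals the determinant of the endomorphism of V/span{e₁} induced by φ. Consequently the automorphism group of B has dimension n² + n. -/

import Mathlib

open Function Submodule

/-! Common framework: `V = ℂ^{n+1}`, `n`-ary multiplications as functions
`(Fin n → V) → V`, the action of `GL(V)` on them, orbits, and the
(n+1)-dimensional n-ary Filippov algebras of Kaygorodov–Volkov, each described
as an alternating `n`-linear map by its values on the increasing tuples of
distinct standard basis vectors (0-indexed: `bt n j` is the tuple omitting `e j`). -/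

/-- The underlying space `V = ℂ^{n+1}`. -/
abbrev nV (n : ℕ) : Type := Fin (n + 1) → ℂ

/-- The `j`-th standard basis vector of `V` (0-indexed). -/
def sb (n : ℕ) (j : Fin (n + 1)) : nV n := Pi.single j 1

/-- The increasing `n`-tuple of standard basis vectors omitting `e j`. -/
def bt (n : ℕ) (j : Fin (n + 1)) : Fin n → nV n := fun k => sb n (j.succAbove k)

/-- The action of `GL(V)` (invertible linear maps) on `n`-ary multiplications:
`(g • μ)(x₁, …, xₙ) = g (μ (g⁻¹ x₁, …, g⁻¹ xₙ))`. -/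
noncomputable def glAct (n : ℕ) (g : nV n ≃ₗ[ℂ] nV n) (μ : (Fin n → nV n) → nV n) :
    (Fin n → nV n) → nV n :=
  fun x => g (μ fun i => g.symm (x i))

/-- The `GL(V)`-orbit of an `n`-ary multiplication. -/
def glOrbit (n : ℕ) (μ : (Fin n → nV n) → nV n) : Set ((Fin n → nV n) → nV n) :=
  {ν | ∃ g : nV n ≃ₗ[ℂ] nV n, ν = glAct n g μ}

/-- The algebra `B`: `[e₂, …, e_{n+1}] = e₁` (0-indexed: the tuple omitting `e 0`
maps to `e 0`), all other increasing basis products zero. -/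
def IsB (n : ℕ) (μ : AlternatingMap ℂ (nV n) (nV n) (Fin n)) : Prop :=
  μ (bt n 0) = sb n 0 ∧ ∀ j : Fin (n + 1), j ≠ 0 → μ (bt n j) = 0

/-- The algebra `C₁`: `[e₂, …, e_{n+1}] = e₁`, `[e₁, e₃, …, e_{n+1}] = e₂`. -/
def IsC1 (n : ℕ) (μ : AlternatingMap ℂ (nV n) (nV n) (Fin n)) : Prop :=
  μ (bt n 0) = sb n 0 ∧ μ (bt n 1) = sb n 1 ∧
    ∀ j : Fin (n + 1), j ≠ 0 → j ≠ 1 → μ (bt n j) = 0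

/-- The algebra `C₂(α)`: `[e₂, …, e_{n+1}] = α e₁ + e₂`, `[e₁, e₃, …, e_{n+1}] = e₂`. -/
def IsC2 (n : ℕ) (α : ℂ) (μ : AlternatingMap ℂ (nV n) (nV n) (Fin n)) : Prop :=
  μ (bt n 0) = α • sb n 0 + sb n 1 ∧ μ (bt n 1) = sb n 1 ∧
    ∀ j : Fin (n + 1), j ≠ 0 → j ≠ 1 → μ (bt n j) = 0

/-- The algebra `C₃`: `[e₁, e₃, …, e_{n+1}] = e₁`, `[e₂, e₃, …, e_{n+1}] = e₂`. -/
def IsC3 (n : ℕ) (μ : AlternatingMap ℂ (nV n) (nV n) (Fin n)) : Prop :=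
  μ (bt n 1) = sb n 0 ∧ μ (bt n 0) = sb n 1 ∧
    ∀ j : Fin (n + 1), j ≠ 0 → j ≠ 1 → μ (bt n j) = 0

/-- The algebra `D_r`: `[e₁, …, e_{i-1}, e_{i+1}, …, e_{n+1}] = e_i` for `1 ≤ i ≤ r`
(0-indexed: the tuple omitting `e j` maps to `e j` for `j < r` and to `0` otherwise). -/
def IsD (n r : ℕ) (μ : AlternatingMap ℂ (nV n) (nV n) (Fin n)) : Prop :=
  ∀ j : Fin (n + 1), ((j : ℕ) < r → μ (bt n j) = sb n j) ∧ (r ≤ (j : ℕ) → μ (bt n j) = 0)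

/-- The automorphism group of the multiplication `μ`, realized as the set of invertible
`(n+1) × (n+1)` matrices `A` with `A (μ x) = μ (A x₁, …, A xₙ)`, topologized as a subspace
of the matrix space. -/
def AutMat (n : ℕ) (μ : AlternatingMap ℂ (nV n) (nV n) (Fin n)) : Type :=
  {A : Matrix (Fin (n + 1)) (Fin (n + 1)) ℂ // IsUnit A.det ∧
    ∀ x : Fin n → nV n, A.mulVec (μ x) = μ fun i => A.mulVec (x i)}

noncomputable instance (n : ℕ) (μ : AlternatingMap ℂ (nV n) (nV n) (Fin n)) : TopologicalSpace (AutMat n μ) :=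
  instTopologicalSpaceSubtype

/-- two alternating maps agreeing on the tuples `bt n j` agree -/
lemma bt_ext {n : ℕ} {f g : AlternatingMap ℂ (nV n) (nV n) (Fin n)}
    (h : ∀ j, f (bt n j) = g (bt n j)) : f = g := by
  refine Module.Basis.ext_alternating (Pi.basisFun ℂ (Fin (n+1))) fun v hv => ?_
  classical
  -- find the missing index j
  have hcard : (Finset.univ.image v).card = n := by
    rw [Finset.card_image_of_injective _ hv, Finset.card_univ, Fintype.card_fin]
  have hne : ((Finset.univ.image v)ᶜ : Finset (Fin (n+1))).Nonempty := by
    rw [← Finset.card_pos, Finset.card_compl, hcard, Fintype.card_fin]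
    omega
  obtain ⟨j, hj⟩ := hne
  have hvj : ∀ i, v i ≠ j := by
    intro i hij
    rw [Finset.mem_compl] at hj
    exact hj (hij ▸ Finset.mem_image_of_mem v (Finset.mem_univ i))
  -- σ i := the preimage of v i under j.succAbove
  have hex : ∀ i, ∃ k, j.succAbove k = v i := fun i => Fin.exists_succAbove_eq (hvj i)
  choose σ hσ using hex
  have hσinj : Function.Injective σ := fun a b hab => hv (by rw [← hσ a, ← hσ b, hab])
  let π : Equiv.Perm (Fin n) := Equiv.ofBijective σ (Finite.injective_iff_bijective.mp hσinj)
  have hcomp : (fun i => (Pi.basisFun ℂ (Fin (n+1))) (v i)) = fun i => bt n j (π i) := by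
    funext i
    simp only [bt, sb, Pi.basisFun_apply, π, Equiv.ofBijective_apply, hσ]
  rw [hcomp]
  have hf := f.map_perm (bt n j) π
  have hg := g.map_perm (bt n j) π
  change f (bt n j ∘ π) = g (bt n j ∘ π)
  rw [hf, hg, h]

/-- the canonical alternating map: determinant of last-n coordinates times e₀ -/
noncomputable def nuB (n : ℕ) : AlternatingMap ℂ (nV n) (nV n) (Fin n) :=
  (LinearMap.toSpanSingleton ℂ (nV n) (sb n 0)).compAlternatingMap
    ((Matrix.detRowAlternating : AlternatingMap ℂ (Fin n → ℂ) ℂ (Fin n)).compLinearMap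
      (LinearMap.funLeft ℂ ℂ Fin.succ))

lemma nuB_apply (n : ℕ) (x : Fin n → nV n) :
    nuB n x = (Matrix.of fun i k => x i k.succ).det • sb n 0 := rfl

lemma isB_eq {n : ℕ} {μ : AlternatingMap ℂ (nV n) (nV n) (Fin n)} (hμ : IsB n μ) :
    ∀ x : Fin n → nV n, μ x = (Matrix.of fun i k => x i k.succ).det • sb n 0 := by
  have : μ = nuB n := by
    apply bt_ext
    intro j
    rcases eq_or_ne j 0 with rfl | hj
    · rw [hμ.1, nuB_apply]
      have : (Matrix.of fun i k => bt n 0 i k.succ) = (1 : Matrix (Fin n) (Fin n) ℂ) := by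
        ext i k
        simp [bt, sb, Matrix.one_apply, Pi.single_apply, Fin.succAbove, Fin.succ_inj, eq_comm]
      rw [this, Matrix.det_one, one_smul]
    · rw [hμ.2 j hj, nuB_apply]
      rcases n with _ | m
      · exact absurd (Fin.fin_one_eq_zero j) hj
      · have hz : ∀ k, (Matrix.of fun (i k : Fin (m+1)) => bt (m+1) j i k.succ) 0 k = 0 := by
          intro k
          have h0 : j.succAbove 0 = 0 := by
            rw [Fin.succAbove_of_castSucc_lt]
            · rfl
            · simpa using Fin.pos_of_ne_zero hj
          simp [bt, sb, h0, Pi.single_apply, (Fin.succ_ne_zero k)]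
        rw [Matrix.det_eq_zero_of_row_eq_zero 0 hz, zero_smul]
  intro x; rw [this, nuB_apply]

/-- lower-right block of a linear map -/
noncomputable def Cof (n : ℕ) (ψ : nV n →ₗ[ℂ] nV n) : Matrix (Fin n) (Fin n) ℂ :=
  Matrix.of fun k l => ψ (sb n l.succ) k.succ

lemma sum_sb {n : ℕ} (v : nV n) : ∑ j, v j • sb n j = v := by
  have h : ∀ j : Fin (n+1), v j • sb n j = Pi.single j (v j) := by
    intro j
    rw [sb, ← Pi.single_smul, smul_eq_mul, mul_one]
  simp_rw [h]
  exact Finset.univ_sum_single v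

lemma aut_forward {n : ℕ} {μ : AlternatingMap ℂ (nV n) (nV n) (Fin n)} (hμ : IsB n μ)
    (ψ : nV n →ₗ[ℂ] nV n) (haut : ∀ x : Fin n → nV n, ψ (μ x) = μ fun i => ψ (x i)) :
    ψ (sb n 0) = (Cof n ψ).det • sb n 0 := by
  have h := haut (bt n 0)
  rw [hμ.1, isB_eq hμ] at h
  have hM : (Matrix.of fun i k => ψ (bt n 0 i) (Fin.succ k)) = (Cof n ψ).transpose := by
    ext i k
    simp [Cof, bt, Fin.zero_succAbove]
  rw [hM, Matrix.det_transpose] at h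
  exact h

lemma aut_backward {n : ℕ} {μ : AlternatingMap ℂ (nV n) (nV n) (Fin n)} (hμ : IsB n μ)
    (ψ : nV n →ₗ[ℂ] nV n) (h0 : ∀ k : Fin n, ψ (sb n 0) k.succ = 0)
    (hd : ψ (sb n 0) 0 = (Cof n ψ).det) :
    ∀ x : Fin n → nV n, ψ (μ x) = μ fun i => ψ (x i) := by
  have hsb : ψ (sb n 0) = (Cof n ψ).det • sb n 0 := by
    funext m
    refine Fin.cases ?_ ?_ m
    · simpa [sb] using hd
    · intro k
      rw [h0 k]
      simp [sb, Pi.single_apply, (Fin.succ_ne_zero k)]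
  intro x
  rw [isB_eq hμ, isB_eq hμ, map_smul, hsb, smul_smul]
  congr 1
  have hM : (Matrix.of fun i k => ψ (x i) (Fin.succ k)) =
      (Matrix.of fun (i l : Fin n) => x i l.succ) * (Cof n ψ).transpose := by
    ext i k
    rw [Matrix.mul_apply]
    have hexp : ψ (x i) = ∑ j, x i j • ψ (sb n j) := by
      conv_lhs => rw [← sum_sb (x i)]
      rw [map_sum]
      simp_rw [map_smul]
    rw [Matrix.of_apply, hexp]
    rw [Finset.sum_apply]
    rw [Fin.sum_univ_succ]
    simp only [Pi.smul_apply, smul_eq_mul, h0 k, mul_zero, zero_add]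
    simp [Cof]
  rw [hM, Matrix.det_mul, Matrix.det_transpose, mul_comm]

noncomputable def qmap (n : ℕ) : nV n →ₗ[ℂ] (Fin n → ℂ) := LinearMap.funLeft ℂ ℂ Fin.succ

lemma qmap_apply (n : ℕ) (v : nV n) (k : Fin n) : qmap n v k = v k.succ := rfl

lemma ker_qmap (n : ℕ) : LinearMap.ker (qmap n) = span ℂ {sb n 0} := by
  ext v
  simp only [LinearMap.mem_ker, mem_span_singleton]
  constructor
  · intro h
    refine ⟨v 0, ?_⟩
    funext m
    refine Fin.cases ?_ ?_ m
    · simp [sb]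
    · intro k
      have h2 : v k.succ = 0 := by
        have := congrFun h k
        rwa [qmap_apply] at this
      rw [h2]
      simp [sb, Pi.single_apply, Fin.succ_ne_zero k]
  · rintro ⟨a, rfl⟩
    funext k
    rw [qmap_apply]
    simp [sb, Pi.single_apply, Fin.succ_ne_zero k]

lemma qmap_surj (n : ℕ) : Function.Surjective (qmap n) := by
  intro w
  exact ⟨Fin.cons 0 w, funext fun k => by rw [qmap_apply, Fin.cons_succ]⟩

noncomputable def quotEquiv (n : ℕ) : (nV n ⧸ span ℂ {sb n 0}) ≃ₗ[ℂ] (Fin n → ℂ) :=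
  (Submodule.quotEquivOfEq _ _ (ker_qmap n).symm).trans
    ((qmap n).quotKerEquivOfSurjective (qmap_surj n))

lemma quotEquiv_mk (n : ℕ) (x : nV n) :
    quotEquiv n (Submodule.Quotient.mk x) = qmap n x := rfl

lemma det_mapQ {n : ℕ} (ψ : nV n →ₗ[ℂ] nV n)
    (h : span ℂ {sb n 0} ≤ (span ℂ {sb n 0}).comap ψ) :
    LinearMap.det ((span ℂ {sb n 0}).mapQ (span ℂ {sb n 0}) ψ h) = (Cof n ψ).det := by
  classical
  set e := quotEquiv n with he
  set b : Module.Basis (Fin n) ℂ (nV n ⧸ span ℂ {sb n 0}) := (Pi.basisFun ℂ (Fin n)).map e.symm with hb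
  rw [← LinearMap.det_toMatrix b]
  congr 1
  ext k l
  have hbl : b l = Submodule.Quotient.mk (sb n l.succ) := by
    rw [hb, Module.Basis.map_apply, Pi.basisFun_apply]
    rw [LinearEquiv.symm_apply_eq, quotEquiv_mk]
    funext k'
    rw [qmap_apply]
    simp [sb, Pi.single_apply, Fin.succ_inj]
  rw [LinearMap.toMatrix_apply, hbl, Submodule.mapQ_apply]
  rw [hb, Module.Basis.map_repr]
  simp only [LinearEquiv.trans_apply, LinearEquiv.symm_symm]
  rw [quotEquiv_mk]
  simp [Pi.basisFun_repr, qmap_apply, Cof]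

lemma part1 {n : ℕ} {μ : AlternatingMap ℂ (nV n) (nV n) (Fin n)} (hμ : IsB n μ)
    (φ : nV n ≃ₗ[ℂ] nV n) :
    (∀ x : Fin n → nV n, φ (μ x) = μ fun i => φ (x i)) ↔
      ∃ h : span ℂ {sb n 0} ≤ (span ℂ {sb n 0}).comap (φ : nV n →ₗ[ℂ] nV n),
        φ (sb n 0) =
          LinearMap.det
            ((span ℂ {sb n 0}).mapQ (span ℂ {sb n 0}) (φ : nV n →ₗ[ℂ] nV n) h) • sb n 0 := by
  constructor
  · intro haut
    have hf := aut_forward hμ (φ : nV n →ₗ[ℂ] nV n) haut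
    have h : span ℂ {sb n 0} ≤ (span ℂ {sb n 0}).comap (φ : nV n →ₗ[ℂ] nV n) := by
      rw [Submodule.span_le]
      intro v hv
      rw [Set.mem_singleton_iff] at hv
      subst hv
      exact Submodule.mem_comap.mpr <| (Submodule.mem_span_singleton).mpr ⟨(Cof n (φ : nV n →ₗ[ℂ] nV n)).det, hf.symm⟩
    exact ⟨h, by rw [det_mapQ]; exact hf⟩
  · rintro ⟨h, heq⟩
    rw [det_mapQ] at heq
    refine aut_backward hμ (φ : nV n →ₗ[ℂ] nV n) ?_ ?_
    · intro k
      rw [show ((φ : nV n →ₗ[ℂ] nV n) (sb n 0)) = φ (sb n 0) from rfl, heq]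
      simp [sb, Pi.single_apply, Fin.succ_ne_zero k]
    · rw [show ((φ : nV n →ₗ[ℂ] nV n) (sb n 0)) = φ (sb n 0) from rfl, heq]
      simp [sb]

lemma cof_mulVecLin {n : ℕ} (A : Matrix (Fin (n+1)) (Fin (n+1)) ℂ) :
    Cof n A.mulVecLin = A.submatrix Fin.succ Fin.succ := by
  ext k l
  simp [Cof, sb, Matrix.mulVecLin_apply]

lemma det_block {n : ℕ} (A : Matrix (Fin (n+1)) (Fin (n+1)) ℂ)
    (h0 : ∀ k : Fin n, A k.succ 0 = 0) :
    A.det = A 0 0 * (A.submatrix Fin.succ Fin.succ).det := by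
  rw [Matrix.det_succ_column_zero, Fin.sum_univ_succ]
  simp only [h0, mul_zero, zero_mul, Finset.sum_const_zero, add_zero, Fin.val_zero, pow_zero,
    one_mul, Fin.succAbove_zero, mul_zero, zero_mul]

lemma autmat_iff {n : ℕ} {μ : AlternatingMap ℂ (nV n) (nV n) (Fin n)} (hμ : IsB n μ)
    (A : Matrix (Fin (n+1)) (Fin (n+1)) ℂ) :
    (IsUnit A.det ∧ ∀ x : Fin n → nV n, A.mulVec (μ x) = μ fun i => A.mulVec (x i)) ↔
    ((∀ k : Fin n, A k.succ 0 = 0) ∧ A 0 0 = (A.submatrix Fin.succ Fin.succ).det ∧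
      (A.submatrix Fin.succ Fin.succ).det ≠ 0) := by
  constructor
  · rintro ⟨hu, haut⟩
    have hf := aut_forward hμ A.mulVecLin (fun x => haut x)
    rw [cof_mulVecLin] at hf
    have hsb : A.mulVecLin (sb n 0) = A.transpose 0 := by
      rw [Matrix.mulVecLin_apply, sb, Matrix.mulVec_single_one]
      rfl
    rw [hsb] at hf
    have h0 : ∀ k : Fin n, A k.succ 0 = 0 := by
      intro k
      have := congrFun hf k.succ
      simpa [sb, Matrix.transpose_apply, Pi.single_apply, Fin.succ_ne_zero k] using this
    have hd : A 0 0 = (A.submatrix Fin.succ Fin.succ).det := by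
      have := congrFun hf 0
      simpa [sb, Matrix.transpose_apply] using this
    refine ⟨h0, hd, ?_⟩
    rw [det_block A h0, hd] at hu
    rw [isUnit_iff_ne_zero] at hu
    exact fun hz => hu (by rw [hz, mul_zero])
  · rintro ⟨h0, hd, hnz⟩
    constructor
    · rw [isUnit_iff_ne_zero, det_block A h0, hd]
      exact mul_ne_zero hnz hnz
    · intro x
      refine aut_backward hμ A.mulVecLin ?_ ?_ x
      · intro k
        rw [Matrix.mulVecLin_apply, sb, Matrix.mulVec_single_one, Matrix.col_apply]
        exact h0 k
      · rw [Matrix.mulVecLin_apply, sb, Matrix.mulVec_single_one, Matrix.col_apply,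
          cof_mulVecLin]
        exact hd

def enc (n : ℕ) : Fin (n ^ 2 + n) ≃ (Fin n ⊕ Fin n × Fin n) :=
  (finCongr (by ring : n ^ 2 + n = n + n * n)).trans
    (finSumFinEquiv.symm.trans (Equiv.sumCongr (Equiv.refl _) finProdFinEquiv.symm))

def Cmat (n : ℕ) (p : Fin (n ^ 2 + n) → ℂ) : Matrix (Fin n) (Fin n) ℂ :=
  Matrix.of fun k l => p ((enc n).symm (Sum.inr (k, l)))

noncomputable def Amat (n : ℕ) (p : Fin (n ^ 2 + n) → ℂ) :
    Matrix (Fin (n+1)) (Fin (n+1)) ℂ :=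
  Matrix.of fun i j =>
    Fin.cases (Fin.cases ((Cmat n p).det) (fun l => p ((enc n).symm (Sum.inl l))) j)
      (fun k => Fin.cases 0 (fun l => Cmat n p k l) j) i

def Fenc (n : ℕ) (A : Matrix (Fin (n+1)) (Fin (n+1)) ℂ) : Fin (n ^ 2 + n) → ℂ :=
  fun i => Sum.elim (fun l => A 0 l.succ) (fun kl => A kl.1.succ kl.2.succ) (enc n i)

@[simp] lemma Amat_zz (n : ℕ) (p) : Amat n p 0 0 = (Cmat n p).det := rfl
@[simp] lemma Amat_zs (n : ℕ) (p) (l : Fin n) :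
    Amat n p 0 l.succ = p ((enc n).symm (Sum.inl l)) := by simp [Amat]
@[simp] lemma Amat_sz (n : ℕ) (p) (k : Fin n) : Amat n p k.succ 0 = 0 := by simp [Amat]
@[simp] lemma Amat_ss (n : ℕ) (p) (k l : Fin n) :
    Amat n p k.succ l.succ = Cmat n p k l := by simp [Amat]

lemma Cmat_Fenc (n : ℕ) (A : Matrix (Fin (n+1)) (Fin (n+1)) ℂ) :
    Cmat n (Fenc n A) = A.submatrix Fin.succ Fin.succ := by
  ext k l
  simp [Cmat, Fenc]

lemma submatrix_Amat (n : ℕ) (p) :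
    (Amat n p).submatrix Fin.succ Fin.succ = Cmat n p := by
  ext k l
  simp [Matrix.submatrix_apply]

lemma Fenc_Amat (n : ℕ) (p) : Fenc n (Amat n p) = p := by
  funext i
  rcases h : enc n i with l | kl
  · have hi : (enc n).symm (Sum.inl l) = i := by rw [← h, Equiv.symm_apply_apply]
    simp [Fenc, h, hi]
  · have hi : (enc n).symm (Sum.inr kl) = i := by rw [← h, Equiv.symm_apply_apply]
    simp [Fenc, h, Cmat, hi]

lemma Amat_Fenc (n : ℕ) (A : Matrix (Fin (n+1)) (Fin (n+1)) ℂ)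
    (h0 : ∀ k : Fin n, A k.succ 0 = 0)
    (hd : A 0 0 = (A.submatrix Fin.succ Fin.succ).det) :
    Amat n (Fenc n A) = A := by
  ext i j
  refine Fin.cases ?_ (fun k => ?_) i <;> refine Fin.cases ?_ (fun l => ?_) j
  · rw [Amat_zz, Cmat_Fenc, hd]
  · simp [Fenc]
  · rw [Amat_sz, h0 k]
  · simp [Cmat_Fenc, Matrix.submatrix_apply]

noncomputable def autHomeo (n : ℕ) (μ : AlternatingMap ℂ (nV n) (nV n) (Fin n))
    (hμ : IsB n μ) :
    AutMat n μ ≃ₜ {p : Fin (n ^ 2 + n) → ℂ // (Cmat n p).det ≠ 0} where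
  toFun a := ⟨Fenc n a.1, by
    rw [Cmat_Fenc]
    exact ((autmat_iff hμ a.1).mp a.2).2.2⟩
  invFun s := ⟨Amat n s.1, (autmat_iff hμ _).mpr
    ⟨fun k => Amat_sz n s.1 k, by rw [submatrix_Amat]; exact Amat_zz n s.1,
      by rw [submatrix_Amat]; exact s.2⟩⟩
  left_inv a := Subtype.ext (Amat_Fenc n a.1 ((autmat_iff hμ a.1).mp a.2).1
    ((autmat_iff hμ a.1).mp a.2).2.1)
  right_inv s := Subtype.ext (Fenc_Amat n s.1)
  continuous_toFun := by
    refine Continuous.subtype_mk ?_ _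
    refine continuous_pi fun i => ?_
    rcases h : enc n i with l | kl
    · simp only [Fenc, h, Sum.elim_inl]
      exact (continuous_apply _).comp ((continuous_apply _).comp continuous_subtype_val)
    · simp only [Fenc, h, Sum.elim_inr]
      exact (continuous_apply _).comp ((continuous_apply _).comp continuous_subtype_val)
  continuous_invFun := by
    refine Continuous.subtype_mk ?_ _
    have hC : Continuous fun s : {p : Fin (n ^ 2 + n) → ℂ // (Cmat n p).det ≠ 0} =>
        Cmat n s.1 :=
      continuous_pi fun k => continuous_pi fun l => by
        show Continuous fun s : {p : Fin (n ^ 2 + n) → ℂ // (Cmat n p).det ≠ 0} =>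
          s.1 ((enc n).symm (Sum.inr (k, l)))
        exact (continuous_apply _).comp continuous_subtype_val
    refine continuous_pi fun i => continuous_pi fun j => ?_
    refine Fin.cases ?_ (fun k => ?_) i <;> refine Fin.cases ?_ (fun l => ?_) j
    · simp only [Amat_zz]
      exact hC.matrix_det
    · simp only [Amat_zs]
      exact (continuous_apply _).comp continuous_subtype_val
    · simp only [Amat_sz]
      exact continuous_const
    · simp only [Amat_ss]
      exact (continuous_apply l).comp ((continuous_apply k).comp hC)

/-- An invertible linear map `φ` is an automorphism of `B` iff
`φ e₁ ∈ span{e₁}` and the scalar `λ` with `φ e₁ = λ e₁` equals the determinant of the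
endomorphism of `V ⧸ span{e₁}` induced by `φ`.  Consequently the automorphism group of
`B` has dimension `n² + n`: some point of it has a neighbourhood homeomorphic to an open
subset of `ℂ^{n²+n}`. -/
theorem automorphisms_of_B (n : ℕ) (hn : 2 ≤ n)
    (μ : AlternatingMap ℂ (nV n) (nV n) (Fin n)) (hμ : IsB n μ) :
    (∀ φ : nV n ≃ₗ[ℂ] nV n,
      (∀ x : Fin n → nV n, φ (μ x) = μ fun i => φ (x i)) ↔
        ∃ h : span ℂ {sb n 0} ≤ (span ℂ {sb n 0}).comap (φ : nV n →ₗ[ℂ] nV n),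
          φ (sb n 0) =
            LinearMap.det
              ((span ℂ {sb n 0}).mapQ (span ℂ {sb n 0}) (φ : nV n →ₗ[ℂ] nV n) h) • sb n 0) ∧
    ∃ (a : AutMat n μ) (U : Set (AutMat n μ)) (S : Set (Fin (n ^ 2 + n) → ℂ)),
      a ∈ U ∧ IsOpen U ∧ IsOpen S ∧ Nonempty (U ≃ₜ S) := by
  refine ⟨fun φ => part1 hμ φ, ?_⟩
  refine ⟨⟨1, ?_, ?_⟩, Set.univ, {p | (Cmat n p).det ≠ 0}, trivial, isOpen_univ, ?_, ?_⟩
  · simp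
  · intro x
    rw [Matrix.one_mulVec]
    congr 1
    funext i
    rw [Matrix.one_mulVec]
  · have hC0 : Continuous fun p : Fin (n ^ 2 + n) → ℂ => Cmat n p :=
      continuous_pi fun k => continuous_pi fun l => by
        show Continuous fun p : Fin (n ^ 2 + n) → ℂ => p ((enc n).symm (Sum.inr (k, l)))
        exact continuous_apply _
    have hC : Continuous fun p : Fin (n ^ 2 + n) → ℂ => (Cmat n p).det := hC0.matrix_det
    exact IsOpen.preimage hC isOpen_compl_singleton
  · exact ⟨(Homeomorph.Set.univ _).trans (autHomeo n μ hμ)⟩
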